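/- Evaluation formula (3.18) for the Dunkl–Cherednik operator: for every Laurent polynomial f ∈ F[U,U^{−1}] and every integer N ≥ 1, (𝒴f)(−q^{2N}) = −t₁ q^{−2N} f(−q^{2N}) − t̄₁ ∑_{p=0}^{N−1} q^{−2p} f(−q^{2(2p−N)}) + t̄₂ ∑_{p=0}^{N−1} q^{−2p−1} f(−q^{2(2p−N+1)}), where g(c) denotes the evaluation of g ∈ F[U,U^{−1}] at U = c. -/

import Mathlib

set_option maxHeartbeats 1000000

noncomputable section

open LaurentPolynomial

/-- The field `F = ℚ(q, t₁, t₂)` of rational functions in three indeterminates. -/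
abbrev F : Type := FractionRing (MvPolynomial (Fin 3) ℚ)

def q : F := algebraMap (MvPolynomial (Fin 3) ℚ) F (MvPolynomial.X 0)
def t1 : F := algebraMap (MvPolynomial (Fin 3) ℚ) F (MvPolynomial.X 1)
def t2 : F := algebraMap (MvPolynomial (Fin 3) ℚ) F (MvPolynomial.X 2)

/-- `a_k = (t̄₁ − t̄₂ q^{2k−1})/(1 − q^{4k−2})`. -/
def aop (k : ℤ) : F :=
  ((t1 - t1⁻¹) - (t2 - t2⁻¹) * q ^ (2 * k - 1)) / (1 - q ^ (4 * k - 2))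

/-- Evaluation of a Laurent polynomial `f ∈ F[U,U⁻¹]` at a point `c ∈ F`
(sending the monomial `U^k` to `c^k`). -/
def evalL (c : F) (f : LaurentPolynomial F) : F := Finsupp.sum (AddMonoidAlgebra.coeff f) fun k r => r * c ^ k

def evalLhom (c : F) : LaurentPolynomial F →ₗ[F] F :=
  (Finsupp.lsum F fun k => LinearMap.mulRight F (c ^ k)).comp
    (LinearMap.mk ⟨AddMonoidAlgebra.coeff, AddMonoidAlgebra.coeff_add⟩ (fun _ _ => rfl) :
      LaurentPolynomial F →ₗ[F] (ℤ →₀ F))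

lemma evalL_eq (c : F) (f : LaurentPolynomial F) : evalL c f = evalLhom c f := rfl

lemma evalL_T (c : F) (m : ℤ) : evalL c (T m) = c ^ m := by
  rw [evalL, T, AddMonoidAlgebra.coeff_single, Finsupp.sum_single_index (by simp)]
  simp

lemma evalL_add (c : F) (f g : LaurentPolynomial F) :
    evalL c (f + g) = evalL c f + evalL c g := by
  simp only [evalL_eq, map_add]

lemma evalL_sub (c : F) (f g : LaurentPolynomial F) :
    evalL c (f - g) = evalL c f - evalL c g := by
  simp only [evalL_eq, map_sub]

lemma evalL_smul (c : F) (a : F) (f : LaurentPolynomial F) :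
    evalL c (a • f) = a * evalL c f := by
  simp only [evalL_eq, map_smul, smul_eq_mul]

lemma evalL_zero (c : F) : evalL c (0 : LaurentPolynomial F) = 0 := by
  simp only [evalL_eq, map_zero]

lemma single_eq_smul_T (k : ℤ) (b : F) :
    (AddMonoidAlgebra.single k b : LaurentPolynomial F) = b • T k := by
  rw [T, AddMonoidAlgebra.smul_single, smul_eq_mul, mul_one]

lemma evalL_single (c : F) (k : ℤ) (b : F) :
    evalL c (AddMonoidAlgebra.single k b) = b * c ^ k := by
  rw [evalL, AddMonoidAlgebra.coeff_single, Finsupp.sum_single_index (by simp)]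

lemma evalL_add' (c : F) (f g : LaurentPolynomial F) :
    evalL c (f + g) = evalL c f + evalL c g :=
  evalL_add c f g

lemma inj : Function.Injective (algebraMap (MvPolynomial (Fin 3) ℚ) F) :=
  IsFractionRing.injective _ _

lemma hX_ne_zero (i : Fin 3) : algebraMap (MvPolynomial (Fin 3) ℚ) F (MvPolynomial.X i) ≠ 0 := by
  simp only [ne_eq, map_eq_zero_iff _ inj]
  exact MvPolynomial.X_ne_zero i

lemma hq0 : q ≠ 0 := hX_ne_zero 0
lemma ht1 : t1 ≠ 0 := hX_ne_zero 1
lemma ht2 : t2 ≠ 0 := hX_ne_zero 2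

lemma hq_pow_ne_one (n : ℕ) (hn : n ≠ 0) : q ^ n ≠ 1 := by
  intro h
  rw [q, ← map_pow, show (1 : F) = algebraMap (MvPolynomial (Fin 3) ℚ) F 1 from (map_one _).symm] at h
  have h2 := congrArg MvPolynomial.constantCoeff (inj h)
  simp [zero_pow hn] at h2

lemma hq_zpow_ne_one (m : ℤ) (hm : m ≠ 0) : q ^ m ≠ 1 := by
  rcases Int.natAbs_eq m with h | h
  · rw [h, zpow_natCast]
    exact hq_pow_ne_one _ (by omega)
  · rw [h, zpow_neg, zpow_natCast]
    rw [ne_eq, inv_eq_one]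
    exact hq_pow_ne_one _ (by omega)

lemma hden (k : ℤ) : 1 - q ^ (4 * k - 2) ≠ 0 := by
  intro h
  have : q ^ (4 * k - 2) = 1 := by linear_combination -h
  exact hq_zpow_ne_one _ (by omega) this

lemma negpow (x : F) (k : ℤ) : (-x) ^ k = (-1 : F) ^ k * x ^ k := by
  rw [neg_eq_neg_one_mul, mul_zpow]

lemma key (k : ℤ) (N : ℕ) :
    t1 * (-(q ^ (2 * (N : ℤ)))) ^ (k - 1)
      - aop k * ((-(q ^ (2 * (N : ℤ)))) ^ (k - 1) + (-(q ^ (2 * (N : ℤ)))) ^ (-k)) =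
    -t1 * q ^ (-(2 * (N : ℤ))) * (-(q ^ (2 * (N : ℤ)))) ^ k
      - (t1 - t1⁻¹) * ∑ p ∈ Finset.range N,
          q ^ (-(2 * (p : ℤ))) * (-(q ^ (2 * (2 * (p : ℤ) - (N : ℤ))))) ^ k
      + (t2 - t2⁻¹) * ∑ p ∈ Finset.range N,
          q ^ (-(2 * (p : ℤ)) - 1) * (-(q ^ (2 * (2 * (p : ℤ) - (N : ℤ) + 1)))) ^ k := by
  set M := (N : ℤ) with hM
  set s := (-1 : F) ^ k with hs_def
  have hm1 : (-1 : F) ≠ 0 := by norm_num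
  have hs : s * s = 1 := by rw [hs_def, ← mul_zpow]; norm_num
  have hsne : s ≠ 0 := zpow_ne_zero _ hm1
  have hsinv : s⁻¹ = s := inv_eq_of_mul_eq_one_right hs
  set A := q ^ (2 * M * k) with hA_def
  set B := q ^ (2 * M) with hB_def
  set C := q ^ (2 * k - 1) with hC_def
  have hA : A ≠ 0 := zpow_ne_zero _ hq0
  have hB : B ≠ 0 := zpow_ne_zero _ hq0
  have hC : C ≠ 0 := zpow_ne_zero _ hq0
  have hCC : C * C = q ^ (4 * k - 2) := by
    rw [hC_def, ← zpow_add₀ hq0]; congr 1; ring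
  have hsum1 : ∑ p ∈ Finset.range N,
      q ^ (-(2 * (p : ℤ))) * (-(q ^ (2 * (2 * (p : ℤ) - M)))) ^ k
      = s * A⁻¹ * ∑ p ∈ Finset.range N, (C * C) ^ p := by
    rw [Finset.mul_sum]
    refine Finset.sum_congr rfl fun p _ => ?_
    rw [negpow, ← hs_def, ← zpow_mul, hCC, ← zpow_natCast (q ^ (4 * k - 2)) p, ← zpow_mul,
        hA_def, ← zpow_neg, mul_left_comm, ← zpow_add₀ hq0]
    rw [mul_assoc s, ← zpow_add₀ hq0]
    congr 2
    ring
  have hsum2 : ∑ p ∈ Finset.range N,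
      q ^ (-(2 * (p : ℤ)) - 1) * (-(q ^ (2 * (2 * (p : ℤ) - M + 1)))) ^ k
      = s * (A⁻¹ * C) * ∑ p ∈ Finset.range N, (C * C) ^ p := by
    rw [Finset.mul_sum]
    refine Finset.sum_congr rfl fun p _ => ?_
    rw [negpow, ← hs_def, ← zpow_mul, hCC, ← zpow_natCast (q ^ (4 * k - 2)) p, ← zpow_mul,
        hA_def, ← zpow_neg, hC_def, ← zpow_add₀ hq0, mul_left_comm, ← zpow_add₀ hq0,
        mul_assoc s, ← zpow_add₀ hq0]
    congr 2
    ring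
  rw [hsum1, hsum2]
  have huCC : C * C - 1 ≠ 0 := by
    intro h
    exact (hCC ▸ hden k) (by linear_combination -h)
  have hCCN : (C * C) ^ N = A * A * B⁻¹ := by
    rw [hCC, ← zpow_natCast (q ^ (4 * k - 2)) N, ← zpow_mul, hA_def, hB_def, ← zpow_neg,
        ← zpow_add₀ hq0, ← zpow_add₀ hq0]
    congr 1
    ring
  set G := ∑ p ∈ Finset.range N, (C * C) ^ p with hG
  have hu2 : (1 : F) - C * C ≠ 0 := fun h => huCC (by linear_combination -h)
  have hgeom : G * (C * C - 1) = A * A * B⁻¹ - 1 := by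
    rw [hG, geom_sum_mul, hCCN]
  have hGval : G = (1 - A * A * B⁻¹) / (1 - C * C) := by
    rw [eq_div_iff hu2]
    linear_combination -hgeom
  have hsk : (-1 : F) ^ (k - 1) = -s := by
    rw [zpow_sub₀ hm1, zpow_one, ← hs_def, div_neg, div_one]
  have e1 : (-B) ^ (k - 1) = -s * (A * B⁻¹) := by
    rw [negpow, hsk, hB_def, ← zpow_mul, hA_def, ← zpow_neg, ← zpow_add₀ hq0]
    congr 2
    ring
  have e2 : (-B) ^ (-k) = s * A⁻¹ := by
    rw [negpow, hB_def, ← zpow_mul, zpow_neg (-1 : F) k, ← hs_def, hsinv, hA_def, ← zpow_neg]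
    congr 2
    ring
  have e3 : (-B) ^ k = s * A := by
    rw [negpow, ← hs_def, hB_def, ← zpow_mul, hA_def]
  have e4 : q ^ (-(2 * M)) = B⁻¹ := by
    rw [hB_def, zpow_neg]
  have haop : aop k = ((t1 - t1⁻¹) - (t2 - t2⁻¹) * C) / (1 - C * C) := by
    simp only [aop, ← hC_def, ← hCC]
  rw [e1, e2, e3, e4]
  have h1 : aop k * (1 - C * C) = (t1 - t1⁻¹) - (t2 - t2⁻¹) * C := by
    rw [haop, div_mul_cancel₀ _ hu2]
  have h2 : G * (1 - C * C) = 1 - A * A * B⁻¹ := by linear_combination -hgeom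
  have h3 : A * A⁻¹ = 1 := mul_inv_cancel₀ hA
  linear_combination (-s * A⁻¹ * G) * h1 + (s * A⁻¹ * aop k) * h2 + (-s * aop k * B⁻¹ * A) * h3

theorem evaluation_formula_Dunkl_Cherednik
    (Y : Module.End F (LaurentPolynomial F))
    (hY : ∀ k : ℤ, Y (T k) = t1 • T (k - 1) - aop k • (T (k - 1) + T (-k)))
    (f : LaurentPolynomial F) (N : ℕ) (hN : 1 ≤ N) :
    evalL (-(q ^ (2 * (N : ℤ)))) (Y f) =
      -t1 * q ^ (-(2 * (N : ℤ))) * evalL (-(q ^ (2 * (N : ℤ)))) f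
      - (t1 - t1⁻¹) * ∑ p ∈ Finset.range N,
          q ^ (-(2 * (p : ℤ))) * evalL (-(q ^ (2 * (2 * (p : ℤ) - (N : ℤ))))) f
      + (t2 - t2⁻¹) * ∑ p ∈ Finset.range N,
          q ^ (-(2 * (p : ℤ)) - 1) * evalL (-(q ^ (2 * (2 * (p : ℤ) - (N : ℤ) + 1)))) f := by
  induction f using AddMonoidAlgebra.induction with
  | zero =>
    simp [map_zero, evalL_zero]
  | single_add k b f hk hb ih =>
    have hb1 : evalL (-(q ^ (2 * (N : ℤ)))) (Y (AddMonoidAlgebra.single k b)) =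
        -t1 * q ^ (-(2 * (N : ℤ))) * evalL (-(q ^ (2 * (N : ℤ)))) (AddMonoidAlgebra.single k b)
        - (t1 - t1⁻¹) * ∑ p ∈ Finset.range N,
            q ^ (-(2 * (p : ℤ))) * evalL (-(q ^ (2 * (2 * (p : ℤ) - (N : ℤ)))))
              (AddMonoidAlgebra.single k b)
        + (t2 - t2⁻¹) * ∑ p ∈ Finset.range N,
            q ^ (-(2 * (p : ℤ)) - 1) * evalL (-(q ^ (2 * (2 * (p : ℤ) - (N : ℤ) + 1))))
              (AddMonoidAlgebra.single k b) := by
      have hp1 : ∑ p ∈ Finset.range N,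
          q ^ (-(2 * (p : ℤ))) * evalL (-(q ^ (2 * (2 * (p : ℤ) - (N : ℤ)))))
            (AddMonoidAlgebra.single k b)
          = b * ∑ p ∈ Finset.range N,
              q ^ (-(2 * (p : ℤ))) * (-(q ^ (2 * (2 * (p : ℤ) - (N : ℤ))))) ^ k := by
        rw [Finset.mul_sum]
        exact Finset.sum_congr rfl fun p _ => by rw [evalL_single]; ring
      have hp2 : ∑ p ∈ Finset.range N,
          q ^ (-(2 * (p : ℤ)) - 1) * evalL (-(q ^ (2 * (2 * (p : ℤ) - (N : ℤ) + 1))))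
            (AddMonoidAlgebra.single k b)
          = b * ∑ p ∈ Finset.range N,
              q ^ (-(2 * (p : ℤ)) - 1) * (-(q ^ (2 * (2 * (p : ℤ) - (N : ℤ) + 1)))) ^ k := by
        rw [Finset.mul_sum]
        exact Finset.sum_congr rfl fun p _ => by rw [evalL_single]; ring
      rw [hp1, hp2, evalL_single, single_eq_smul_T, map_smul, evalL_smul, hY k, evalL_sub,
        evalL_smul, evalL_smul, evalL_add, evalL_T, evalL_T]
      linear_combination b * key k N
    have hs1 : ∑ p ∈ Finset.range N,
        q ^ (-(2 * (p : ℤ))) * evalL (-(q ^ (2 * (2 * (p : ℤ) - (N : ℤ)))))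
          (AddMonoidAlgebra.single k b + f)
        = (∑ p ∈ Finset.range N,
            q ^ (-(2 * (p : ℤ))) * evalL (-(q ^ (2 * (2 * (p : ℤ) - (N : ℤ)))))
              (AddMonoidAlgebra.single k b))
          + ∑ p ∈ Finset.range N,
              q ^ (-(2 * (p : ℤ))) * evalL (-(q ^ (2 * (2 * (p : ℤ) - (N : ℤ))))) f := by
      rw [← Finset.sum_add_distrib]
      exact Finset.sum_congr rfl fun p _ => by rw [evalL_add']; ring
    have hs2 : ∑ p ∈ Finset.range N,
        q ^ (-(2 * (p : ℤ)) - 1) * evalL (-(q ^ (2 * (2 * (p : ℤ) - (N : ℤ) + 1))))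
          (AddMonoidAlgebra.single k b + f)
        = (∑ p ∈ Finset.range N,
            q ^ (-(2 * (p : ℤ)) - 1) * evalL (-(q ^ (2 * (2 * (p : ℤ) - (N : ℤ) + 1))))
              (AddMonoidAlgebra.single k b))
          + ∑ p ∈ Finset.range N,
              q ^ (-(2 * (p : ℤ)) - 1) * evalL (-(q ^ (2 * (2 * (p : ℤ) - (N : ℤ) + 1)))) f := by
      rw [← Finset.sum_add_distrib]
      exact Finset.sum_congr rfl fun p _ => by rw [evalL_add']; ring
    rw [show Y (AddMonoidAlgebra.single k b + f) = Y (AddMonoidAlgebra.single k b) + Y f from map_add Y _ _,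
      evalL_add, evalL_add', hs1, hs2]
    linear_combination hb1 + ih

end
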